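/- Strong–weak dichotomy: let (X, d, μ) be a separable metric probability space and suppose there exists a strong mode v, i.e. liminf_{r→0} μ(B(v,r))/M_r ≥ 1 where M_r = sup_x μ(B(x,r)). Then every weak mode u (i.e. liminf_{r→0} μ(B(u,r))/μ(B(w,r)) ≥ 1 for all w ≠ u) is itself a strong mode. -/

import Mathlib

open MeasureTheory Metric Filter Topology

/-- Ball-mass ratio with the conventions `c/0 = ∞` for `c > 0` and `0/0 = 1`. -/
noncomputable def mRatio (a b : ENNReal) : ENNReal :=
  if b = 0 then (if a = 0 then 1 else ⊤) else a / b

lemma mRatio_chain (a b c : ENNReal) (hc : c ≠ 0) (hb : b ≠ ⊤) :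
    mRatio a b * mRatio b c ≤ mRatio a c := by
  simp only [mRatio, if_neg hc]
  by_cases hb0 : b = 0
  · simp [hb0]
  · rw [if_neg hb0]
    calc a / b * (b / c) = a / b * b / c := by rw [mul_div_assoc]
    _ ≤ a / c := by rw [ENNReal.div_mul_cancel hb0 hb]

lemma sup_ball_pos {X : Type*} [MetricSpace X] [TopologicalSpace.SeparableSpace X]
    [MeasurableSpace X] [BorelSpace X] (μ : Measure X) [IsProbabilityMeasure μ]
    [Nonempty X] {r : ℝ} (hr : 0 < r) : (⨆ x : X, μ (ball x r)) ≠ 0 := by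
  intro h
  have hcov : (Set.univ : Set X) ⊆ ⋃ n, ball (TopologicalSpace.denseSeq X n) r := by
    intro x _
    obtain ⟨n, hn⟩ := (TopologicalSpace.denseRange_denseSeq X).exists_dist_lt x hr
    exact Set.mem_iUnion.2 ⟨n, by simpa [dist_comm] using hn⟩
  have h1 : μ Set.univ ≤ ∑' n, μ (ball (TopologicalSpace.denseSeq X n) r) :=
    (measure_mono hcov).trans (measure_iUnion_le _)
  have hz : ∀ n, μ (ball (TopologicalSpace.denseSeq X n) r) = 0 := fun n =>
    le_antisymm (h ▸ le_iSup (fun x : X => μ (ball x r)) _) zero_le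
  simp [hz, measure_univ] at h1

theorem stmt9 {X : Type*} [MetricSpace X] [TopologicalSpace.SeparableSpace X]
    [MeasurableSpace X] [BorelSpace X] (μ : Measure X) [IsProbabilityMeasure μ]
    (u v : X)
    (hv : 1 ≤ Filter.liminf
        (fun r : ℝ => mRatio (μ (ball v r)) (⨆ x : X, μ (ball x r))) (𝓝[>] (0:ℝ)))
    (hu : ∀ w : X, w ≠ u →
        1 ≤ Filter.liminf
          (fun r : ℝ => mRatio (μ (ball u r)) (μ (ball w r))) (𝓝[>] (0:ℝ))) :
    1 ≤ Filter.liminf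
      (fun r : ℝ => mRatio (μ (ball u r)) (⨆ x : X, μ (ball x r))) (𝓝[>] (0:ℝ)) := by
  have : Nonempty X := ⟨u⟩
  by_cases huv : v = u
  · rwa [huv] at hv
  have h1 := hu v huv
  have key : Filter.liminf (fun r : ℝ => mRatio (μ (ball u r)) (μ (ball v r)))
        (𝓝[>] (0:ℝ)) *
      Filter.liminf (fun r : ℝ => mRatio (μ (ball v r)) (⨆ x : X, μ (ball x r)))
        (𝓝[>] (0:ℝ)) ≤
      Filter.liminf (fun r : ℝ => mRatio (μ (ball u r)) (⨆ x : X, μ (ball x r)))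
        (𝓝[>] (0:ℝ)) := by
    refine le_trans ENNReal.le_liminf_mul (liminf_le_liminf ?_)
    filter_upwards [self_mem_nhdsWithin] with r (hr : 0 < r)
    exact mRatio_chain _ _ _ (sup_ball_pos μ hr) (measure_ne_top μ _)
  calc (1 : ENNReal) = 1 * 1 := (one_mul 1).symm
  _ ≤ _ := le_trans (mul_le_mul' h1 hv) key
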